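/- arXiv:2003.02058 — 2 statements merged into one kernel-verified Lean document; each statement's English description precedes it below -/
import Mathlib

section
/- Let (∂ : I → H, i) be a Hopf algebra projection over a field k, with kernel generator maps f, g : I → I, and set B = RKer(∂). Then: (i) f and g take all their values in B; (ii) f restricted to B is the identity, so f ∘ f = f; (iii) f(v · i(x)) = ε(x) f(v) and f(i(x) · v) = i(x) ▷_ad f(v) for all v ∈ I, x ∈ H; (iv) g ∘ f = g. -/
open TensorProduct

/-- `RKer(Ω) = {v ∈ I : Σ v' ⊗ Ω(v'') = v ⊗ 1}`. -/
def RKer (k : Type*) {I H : Type*} [CommSemiring k] [Semiring I] [Semiring H]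
    [HopfAlgebra k I] [HopfAlgebra k H] (Ω : I →ₐc[k] H) : Set I :=
  {v : I |
    TensorProduct.map (LinearMap.id : I →ₗ[k] I) Ω.toLinearMap (Coalgebra.comul (R := k) v)
      = v ⊗ₜ[k] (1 : H)}

/-- The left adjoint action of a Hopf algebra on itself:
`adT (a ⊗ b) = Σ a' b S(a'')`. -/
noncomputable def adT (k A : Type*) [CommSemiring k] [Semiring A] [HopfAlgebra k A] :
    A ⊗[k] A →ₗ[k] A :=
  (LinearMap.mul' k A)
    ∘ₗ (TensorProduct.map LinearMap.id (LinearMap.mul' k A))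
    ∘ₗ (TensorProduct.map LinearMap.id
          (TensorProduct.map LinearMap.id (HopfAlgebra.antipode (R := k))))
    ∘ₗ (TensorProduct.map LinearMap.id (TensorProduct.comm k A A).toLinearMap)
    ∘ₗ (TensorProduct.assoc k A A A).toLinearMap
    ∘ₗ (TensorProduct.map (Coalgebra.comul (R := k)) LinearMap.id)

/-- The kernel generator map `f(v) = Σ v' · i(∂(S(v'')))`. -/
noncomputable def fker {k I H : Type*} [Field k] [Ring I] [Ring H]
    [HopfAlgebra k I] [HopfAlgebra k H] (p : I →ₐc[k] H) (i : H →ₐc[k] I) : I →ₗ[k] I :=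
  (LinearMap.mul' k I)
    ∘ₗ (TensorProduct.map LinearMap.id
          (i.toLinearMap ∘ₗ p.toLinearMap ∘ₗ HopfAlgebra.antipode (R := k)))
    ∘ₗ (Coalgebra.comul (R := k))

/-- The kernel generator map `g(v) = Σ i(∂(v')) · S(v'')`. -/
noncomputable def gker {k I H : Type*} [Field k] [Ring I] [Ring H]
    [HopfAlgebra k I] [HopfAlgebra k H] (p : I →ₐc[k] H) (i : H →ₐc[k] I) : I →ₗ[k] I :=
  (LinearMap.mul' k I)
    ∘ₗ (TensorProduct.map (i.toLinearMap ∘ₗ p.toLinearMap) (HopfAlgebra.antipode (R := k)))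
    ∘ₗ (Coalgebra.comul (R := k))


section Hopf11Infra

open Coalgebra HopfAlgebra

variable {k : Type*} [CommSemiring k]

section coalg
variable {C : Type*} [AddCommMonoid C] [Module k C] [Coalgebra k C]

lemma h11_sum_counit_smul {a : C} {ι : Type*} (r : Repr k a ι) :
    ∑ i ∈ r.index, counit (R := k) (r.left i) • r.right i = a := by
  calc ∑ i ∈ r.index, counit (R := k) (r.left i) • r.right i
      = TensorProduct.lid k C (∑ i ∈ r.index, counit (R := k) (r.left i) ⊗ₜ[k] r.right i) := by
        rw [map_sum]; simp
    _ = TensorProduct.lid k C ((1 : k) ⊗ₜ[k] a) := by rw [sum_counit_tmul_eq]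
    _ = a := by simp

lemma h11_sum_smul_counit {a : C} {ι : Type*} (r : Repr k a ι) :
    ∑ i ∈ r.index, counit (R := k) (r.right i) • r.left i = a := by
  calc ∑ i ∈ r.index, counit (R := k) (r.right i) • r.left i
      = TensorProduct.rid k C (∑ i ∈ r.index, r.left i ⊗ₜ[k] counit (R := k) (r.right i)) := by
        rw [map_sum]; simp
    _ = TensorProduct.rid k C (a ⊗ₜ[k] (1 : k)) := by rw [sum_tmul_counit_eq]
    _ = a := by simp

variable {A B : Type*} [Semiring A] [Algebra k A] [Semiring B] [Algebra k B]

/-- Convolution product on `Hom(C, A)`. -/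
noncomputable def h11conv (φ ψ : C →ₗ[k] A) : C →ₗ[k] A :=
  LinearMap.mul' k A ∘ₗ TensorProduct.map φ ψ ∘ₗ Coalgebra.comul

/-- Convolution unit. -/
noncomputable def h11unit : C →ₗ[k] A := Algebra.linearMap k A ∘ₗ Coalgebra.counit

lemma h11conv_repr (φ ψ : C →ₗ[k] A) {x : C} {ι : Type*} (r : Repr k x ι) :
    h11conv φ ψ x = ∑ i ∈ r.index, φ (r.left i) * ψ (r.right i) := by
  simp only [h11conv, LinearMap.comp_apply, ← r.eq, map_sum, TensorProduct.map_tmul,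
    LinearMap.mul'_apply]

lemma h11unit_apply (x : C) : (h11unit : C →ₗ[k] A) x = counit (R := k) x • 1 := by
  simp [h11unit, Algebra.smul_def]

lemma h11conv_unit_left (φ : C →ₗ[k] A) : h11conv h11unit φ = φ := by
  ext x
  rw [h11conv_repr _ _ (ℛ k x)]
  simp only [h11unit_apply, smul_mul_assoc, one_mul, ← map_smul]
  rw [← map_sum, h11_sum_counit_smul]

lemma h11conv_unit_right (φ : C →ₗ[k] A) : h11conv φ h11unit = φ := by
  ext x
  rw [h11conv_repr _ _ (ℛ k x)]
  simp only [h11unit_apply, mul_smul_comm, mul_one, ← map_smul]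
  rw [← map_sum, h11_sum_smul_counit]

lemma h11conv_assoc (φ ψ χ : C →ₗ[k] A) :
    h11conv (h11conv φ ψ) χ = h11conv φ (h11conv ψ χ) := by
  ext x
  have key := congrArg
    (LinearMap.mul' k A ∘ₗ TensorProduct.map φ (LinearMap.mul' k A ∘ₗ TensorProduct.map ψ χ))
    (sum_tmul_tmul_eq (ℛ k x) (fun i => ℛ k ((ℛ k x).left i)) (fun i => ℛ k ((ℛ k x).right i)))
  simp only [map_sum, LinearMap.comp_apply, TensorProduct.map_tmul, LinearMap.mul'_apply] at key
  have hL : (∑ i ∈ (ℛ k x).index, h11conv φ ψ ((ℛ k x).left i) * χ ((ℛ k x).right i))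
      = ∑ i ∈ (ℛ k x).index, ∑ j ∈ (ℛ k ((ℛ k x).left i)).index,
          φ ((ℛ k ((ℛ k x).left i)).left j) *
            (ψ ((ℛ k ((ℛ k x).left i)).right j) * χ ((ℛ k x).right i)) := by
    refine Finset.sum_congr rfl (fun i _ => ?_)
    rw [h11conv_repr φ ψ (ℛ k ((ℛ k x).left i)), Finset.sum_mul]
    exact Finset.sum_congr rfl (fun j _ => mul_assoc _ _ _)
  have hR : (∑ i ∈ (ℛ k x).index, φ ((ℛ k x).left i) * h11conv ψ χ ((ℛ k x).right i))
      = ∑ i ∈ (ℛ k x).index, ∑ j ∈ (ℛ k ((ℛ k x).right i)).index,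
          φ ((ℛ k x).left i) *
            (ψ ((ℛ k ((ℛ k x).right i)).left j) * χ ((ℛ k ((ℛ k x).right i)).right j)) := by
    refine Finset.sum_congr rfl (fun i _ => ?_)
    rw [h11conv_repr ψ χ (ℛ k ((ℛ k x).right i)), Finset.mul_sum]
  rw [h11conv_repr (h11conv φ ψ) χ (ℛ k x), h11conv_repr φ (h11conv ψ χ) (ℛ k x), hL, hR]
  exact key

lemma h11conv_inv_unique {φ ψ χ : C →ₗ[k] A} (h1 : h11conv φ ψ = h11unit)
    (h2 : h11conv ψ χ = h11unit) : φ = χ := by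
  have := h11conv_assoc φ ψ χ
  rw [h1, h2, h11conv_unit_left, h11conv_unit_right] at this
  exact this.symm

lemma h11_algHom_comp_conv (F : A →ₐ[k] B) (φ ψ : C →ₗ[k] A) :
    F.toLinearMap ∘ₗ h11conv φ ψ = h11conv (F.toLinearMap ∘ₗ φ) (F.toLinearMap ∘ₗ ψ) := by
  ext x
  simp only [LinearMap.comp_apply, AlgHom.toLinearMap_apply]
  rw [h11conv_repr φ ψ (ℛ k x), h11conv_repr _ _ (ℛ k x), map_sum]
  simp

lemma h11_algHom_comp_unit (F : A →ₐ[k] B) :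
    F.toLinearMap ∘ₗ (h11unit : C →ₗ[k] A) = h11unit := by
  ext x
  simp [h11unit_apply, Algebra.smul_def, ← map_mul]

lemma h11_conv_comp (φ ψ : C →ₗ[k] A) {D : Type*} [AddCommMonoid D] [Module k D]
    [Coalgebra k D] (G : D →ₗ[k] C)
    (hG : TensorProduct.map G G ∘ₗ Coalgebra.comul = Coalgebra.comul ∘ₗ G) :
    h11conv φ ψ ∘ₗ G = h11conv (φ ∘ₗ G) (ψ ∘ₗ G) := by
  unfold h11conv
  rw [LinearMap.comp_assoc, LinearMap.comp_assoc, ← hG, TensorProduct.map_comp]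
  simp only [← LinearMap.comp_assoc]

lemma h11_unit_comp {D : Type*} [AddCommMonoid D] [Module k D] [Coalgebra k D] (G : D →ₗ[k] C)
    (hG : Coalgebra.counit ∘ₗ G = Coalgebra.counit) :
    (h11unit : C →ₗ[k] A) ∘ₗ G = h11unit := by
  unfold h11unit
  rw [LinearMap.comp_assoc, hG]

end coalg

section reprmap
variable {C D : Type*} [AddCommMonoid C] [Module k C] [Coalgebra k C]
  [AddCommMonoid D] [Module k D] [Coalgebra k D]

/-- Push a representation through a coalgebra-morphism. -/
noncomputable def h11ReprMap {F : Type*} [FunLike F C D] [CoalgHomClass F k C D] (f : F)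
    {a : C} {ι : Type*} (r : Repr k a ι) : Repr k (f a) ι where
  index := r.index
  left := fun i => f (r.left i)
  right := fun i => f (r.right i)
  eq := by
    have h := LinearMap.congr_fun (CoalgHomClass.map_comp_comul (R := k) f) a
    simp only [LinearMap.comp_apply, LinearMap.coe_coe] at h
    rw [← h, ← r.eq, map_sum]
    simp

end reprmap

section bialg
variable {A : Type*} [Semiring A] [Bialgebra k A]

/-- Representation of `1`. -/
noncomputable def h11ReprOne : Repr k (1 : A) Unit where
  index := Finset.univ
  left := fun _ => 1
  right := fun _ => 1
  eq := by simp [Algebra.TensorProduct.one_def]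

/-- Representation of a product. -/
noncomputable def h11ReprMul {a b : A} {ι κ : Type*} (ra : Repr k a ι) (rb : Repr k b κ) : Repr k (a * b) (ι × κ) where
  index := ra.index ×ˢ rb.index
  left := fun ij => ra.left ij.1 * rb.left ij.2
  right := fun ij => ra.right ij.1 * rb.right ij.2
  eq := by
    rw [Finset.sum_product, Bialgebra.comul_mul, ← ra.eq, ← rb.eq, Finset.sum_mul_sum]
    simp [Algebra.TensorProduct.tmul_mul_tmul]

@[simp] lemma h11ReprMul_index {a b : A} {ι κ : Type*} (ra : Repr k a ι) (rb : Repr k b κ) :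
    (h11ReprMul ra rb).index = ra.index ×ˢ rb.index := rfl
@[simp] lemma h11ReprMul_left {a b : A} {ι κ : Type*} (ra : Repr k a ι) (rb : Repr k b κ) (ij) :
    (h11ReprMul ra rb).left ij = ra.left ij.1 * rb.left ij.2 := rfl
@[simp] lemma h11ReprMul_right {a b : A} {ι κ : Type*} (ra : Repr k a ι) (rb : Repr k b κ) (ij) :
    (h11ReprMul ra rb).right ij = ra.right ij.1 * rb.right ij.2 := rfl

end bialg

section hopf
variable {A : Type*} [Semiring A] [HopfAlgebra k A]

lemma h11conv_antipode_id :
    h11conv (antipode (R := k) (A := A)) LinearMap.id = h11unit :=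
  mul_antipode_rTensor_comul

lemma h11conv_id_antipode :
    h11conv LinearMap.id (antipode (R := k) (A := A)) = h11unit :=
  mul_antipode_lTensor_comul

lemma h11_antipode_one : antipode (R := k) (1 : A) = 1 := by
  have h := mul_antipode_rTensor_comul_apply (R := k) (1 : A)
  rw [Bialgebra.comul_one] at h
  simpa [Algebra.TensorProduct.one_def] using h

lemma h11_comul_eq_conv :
    (Coalgebra.comul (R := k) (A := A)) =
      h11conv (Algebra.TensorProduct.includeLeft : A →ₐ[k] A ⊗[k] A).toLinearMap
        (Algebra.TensorProduct.includeRight : A →ₐ[k] A ⊗[k] A).toLinearMap := by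
  ext x
  rw [h11conv_repr _ _ (ℛ k x), ← (ℛ k x).eq]
  simp [Algebra.TensorProduct.tmul_mul_tmul]

lemma h11_flip_SS_eq_conv :
    (TensorProduct.comm k A A).toLinearMap ∘ₗ
      TensorProduct.map (antipode (R := k)) (antipode (R := k)) ∘ₗ Coalgebra.comul =
    h11conv
      ((Algebra.TensorProduct.includeRight : A →ₐ[k] A ⊗[k] A).toLinearMap ∘ₗ antipode (R := k))
      ((Algebra.TensorProduct.includeLeft : A →ₐ[k] A ⊗[k] A).toLinearMap ∘ₗ antipode (R := k)) := by
  ext x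
  rw [h11conv_repr _ _ (ℛ k x)]
  conv_lhs => rw [LinearMap.comp_apply, LinearMap.comp_apply, ← (ℛ k x).eq]
  rw [map_sum, map_sum]
  simp [Algebra.TensorProduct.tmul_mul_tmul]

lemma h11_comul_antipode :
    (Coalgebra.comul (R := k) (A := A)) ∘ₗ antipode (R := k) =
      (TensorProduct.comm k A A).toLinearMap ∘ₗ
        TensorProduct.map (antipode (R := k)) (antipode (R := k)) ∘ₗ Coalgebra.comul := by
  have hcomul : (Bialgebra.comulAlgHom k A).toLinearMap = Coalgebra.comul (R := k) := by
    ext x; simp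
  refine h11conv_inv_unique (ψ := Coalgebra.comul (R := k) (A := A)) ?_ ?_
  · have h := h11_algHom_comp_conv (Bialgebra.comulAlgHom k A)
      (antipode (R := k) (A := A)) LinearMap.id
    rw [h11conv_antipode_id, h11_algHom_comp_unit, hcomul, LinearMap.comp_id] at h
    exact h.symm
  · rw [h11_flip_SS_eq_conv, h11_comul_eq_conv, h11conv_assoc, ← h11conv_assoc
      (Algebra.TensorProduct.includeRight : A →ₐ[k] A ⊗[k] A).toLinearMap]
    have hmid : h11conv
        (Algebra.TensorProduct.includeRight : A →ₐ[k] A ⊗[k] A).toLinearMap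
        ((Algebra.TensorProduct.includeRight : A →ₐ[k] A ⊗[k] A).toLinearMap ∘ₗ
          antipode (R := k)) = h11unit := by
      have h := h11_algHom_comp_conv
        (Algebra.TensorProduct.includeRight : A →ₐ[k] A ⊗[k] A)
        (LinearMap.id (R := k) (M := A)) (antipode (R := k))
      rw [h11conv_id_antipode, h11_algHom_comp_unit, LinearMap.comp_id] at h
      exact h.symm
    rw [hmid, h11conv_unit_left]
    have h := h11_algHom_comp_conv
      (Algebra.TensorProduct.includeLeft : A →ₐ[k] A ⊗[k] A)
      (LinearMap.id (R := k) (M := A)) (antipode (R := k))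
    rw [h11conv_id_antipode, h11_algHom_comp_unit, LinearMap.comp_id] at h
    exact h.symm

lemma h11_comul_antipode_repr {a : A} {ι : Type*} (r : Repr k a ι) :
    Coalgebra.comul (R := k) (antipode (R := k) a) =
      ∑ i ∈ r.index, antipode (R := k) (r.right i) ⊗ₜ[k] antipode (R := k) (r.left i) := by
  have h := LinearMap.congr_fun (h11_comul_antipode (k := k) (A := A)) a
  simp only [LinearMap.comp_apply] at h
  rw [h, ← r.eq, map_sum, map_sum]
  simp

/-- Representation of `antipode a`. -/
noncomputable def h11ReprAntipode {a : A} {ι : Type*} (r : Repr k a ι) : Repr k (antipode (R := k) a) ι where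
  index := r.index
  left := fun i => antipode (R := k) (r.right i)
  right := fun i => antipode (R := k) (r.left i)
  eq := (h11_comul_antipode_repr r).symm

/-- A bialgebra morphism between Hopf algebras commutes with the antipode. -/
lemma h11_bialgHom_antipode {B : Type*} [Semiring B] [HopfAlgebra k B]
    (F : A →ₐc[k] B) (a : A) :
    F (antipode (R := k) a) = antipode (R := k) (F a) := by
  have key : F.toLinearMap ∘ₗ antipode (R := k) = antipode (R := k) ∘ₗ F.toLinearMap := by
    refine h11conv_inv_unique (ψ := F.toLinearMap) ?_ ?_
    · have h := h11_algHom_comp_conv (F : A →ₐ[k] B) (antipode (R := k)) LinearMap.id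
      rw [h11conv_antipode_id, h11_algHom_comp_unit, LinearMap.comp_id] at h
      have : (F : A →ₐ[k] B).toLinearMap = F.toLinearMap := rfl
      rw [this] at h
      exact h.symm
    · have h := h11_conv_comp (LinearMap.id (R := k) (M := B)) (antipode (R := k))
        F.toLinearMap (CoalgHomClass.map_comp_comul F)
      rw [h11conv_id_antipode, LinearMap.id_comp,
        h11_unit_comp F.toLinearMap (CoalgHomClass.counit_comp F)] at h
      exact h.symm
  exact LinearMap.congr_fun key a

lemma h11_antipode_mul_aux_right {a b : A} {ι κ : Type*} (ra : Repr k a ι) (rb : Repr k b κ)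
    {ι' κ' : Type*} (rar : ∀ i, Repr k (ra.right i) ι') (rbr : ∀ j, Repr k (rb.right j) κ') :
    (∑ i ∈ ra.index, ∑ c ∈ (rar i).index, ∑ j ∈ rb.index, ∑ d ∈ (rbr j).index,
      antipode (R := k) (ra.left i * rb.left j) *
        (((rar i).left c * (rbr j).left d) *
          (antipode (R := k) ((rbr j).right d) * antipode (R := k) ((rar i).right c))))
      = antipode (R := k) (a * b) := by
  have step_d : ∀ (i : ι) (c : ι'), ∀ j ∈ rb.index,
      (∑ d ∈ (rbr j).index, antipode (R := k) (ra.left i * rb.left j) *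
        (((rar i).left c * (rbr j).left d) *
          (antipode (R := k) ((rbr j).right d) * antipode (R := k) ((rar i).right c))))
      = counit (R := k) (rb.right j) • (antipode (R := k) (ra.left i * rb.left j) *
          ((rar i).left c * antipode (R := k) ((rar i).right c))) := by
    intro i c j _
    have hterm : ∀ d, antipode (R := k) (ra.left i * rb.left j) *
        (((rar i).left c * (rbr j).left d) *
          (antipode (R := k) ((rbr j).right d) * antipode (R := k) ((rar i).right c)))
        = antipode (R := k) (ra.left i * rb.left j) *
          ((rar i).left c * (((rbr j).left d * antipode (R := k) ((rbr j).right d)) *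
            antipode (R := k) ((rar i).right c))) := by
      intro d
      rw [mul_assoc ((rar i).left c), ← mul_assoc ((rbr j).left d)]
    rw [Finset.sum_congr rfl fun d _ => hterm d, ← Finset.mul_sum, ← Finset.mul_sum,
      ← Finset.sum_mul, sum_mul_antipode_eq_algebraMap_counit (rbr j), ← Algebra.smul_def]
    rw [mul_smul_comm, mul_smul_comm]
  have step_j : ∀ (i : ι) (c : ι'),
      (∑ j ∈ rb.index, counit (R := k) (rb.right j) •
        (antipode (R := k) (ra.left i * rb.left j) *
          ((rar i).left c * antipode (R := k) ((rar i).right c))))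
      = antipode (R := k) (ra.left i * b) *
          ((rar i).left c * antipode (R := k) ((rar i).right c)) := by
    intro i c
    have : (∑ j ∈ rb.index, counit (R := k) (rb.right j) •
        antipode (R := k) (ra.left i * rb.left j)) = antipode (R := k) (ra.left i * b) := by
      conv_rhs => rw [← h11_sum_smul_counit rb]
      rw [Finset.mul_sum, map_sum]
      exact Finset.sum_congr rfl fun j _ => by
        rw [mul_smul_comm, map_smul]
    rw [← this, Finset.sum_mul]
    exact Finset.sum_congr rfl fun j _ => (smul_mul_assoc _ _ _).symm
  have step_c : ∀ i ∈ ra.index,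
      (∑ c ∈ (rar i).index, antipode (R := k) (ra.left i * b) *
        ((rar i).left c * antipode (R := k) ((rar i).right c)))
      = counit (R := k) (ra.right i) • antipode (R := k) (ra.left i * b) := by
    intro i _
    rw [← Finset.mul_sum, sum_mul_antipode_eq_algebraMap_counit (rar i)]
    simp [Algebra.algebraMap_eq_smul_one, mul_smul_comm]
  have step_i : (∑ i ∈ ra.index, counit (R := k) (ra.right i) •
      antipode (R := k) (ra.left i * b)) = antipode (R := k) (a * b) := by
    conv_rhs => rw [← h11_sum_smul_counit ra]
    rw [Finset.sum_mul, map_sum]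
    exact Finset.sum_congr rfl fun i _ => by
      rw [smul_mul_assoc, map_smul]
  calc (∑ i ∈ ra.index, ∑ c ∈ (rar i).index, ∑ j ∈ rb.index, ∑ d ∈ (rbr j).index,
      antipode (R := k) (ra.left i * rb.left j) *
        (((rar i).left c * (rbr j).left d) *
          (antipode (R := k) ((rbr j).right d) * antipode (R := k) ((rar i).right c))))
      = ∑ i ∈ ra.index, ∑ c ∈ (rar i).index, ∑ j ∈ rb.index,
          counit (R := k) (rb.right j) • (antipode (R := k) (ra.left i * rb.left j) *
            ((rar i).left c * antipode (R := k) ((rar i).right c))) :=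
        Finset.sum_congr rfl fun i _ => Finset.sum_congr rfl fun c _ =>
          Finset.sum_congr rfl fun j hj => step_d i c j hj
    _ = ∑ i ∈ ra.index, ∑ c ∈ (rar i).index, antipode (R := k) (ra.left i * b) *
          ((rar i).left c * antipode (R := k) ((rar i).right c)) :=
        Finset.sum_congr rfl fun i _ => Finset.sum_congr rfl fun c _ => step_j i c
    _ = ∑ i ∈ ra.index, counit (R := k) (ra.right i) • antipode (R := k) (ra.left i * b) :=
        Finset.sum_congr rfl fun i hi => step_c i hi
    _ = antipode (R := k) (a * b) := step_i

lemma h11_antipode_mul_aux_left {a b : A} {ι κ : Type*} (ra : Repr k a ι) (rb : Repr k b κ)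
    {ι' κ' : Type*} (ral : ∀ i, Repr k (ra.left i) ι') (rbl : ∀ j, Repr k (rb.left j) κ') :
    (∑ i ∈ ra.index, ∑ c ∈ (ral i).index, ∑ j ∈ rb.index, ∑ d ∈ (rbl j).index,
      antipode (R := k) ((ral i).left c * (rbl j).left d) *
        (((ral i).right c * (rbl j).right d) *
          (antipode (R := k) (rb.right j) * antipode (R := k) (ra.right i))))
      = antipode (R := k) b * antipode (R := k) a := by
  have hSb : (∑ j ∈ rb.index, counit (R := k) (rb.left j) • antipode (R := k) (rb.right j))
      = antipode (R := k) b := by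
    simp only [← map_smul, ← map_sum]
    rw [h11_sum_counit_smul rb]
  have hSa : (∑ i ∈ ra.index, counit (R := k) (ra.left i) • antipode (R := k) (ra.right i))
      = antipode (R := k) a := by
    simp only [← map_smul, ← map_sum]
    rw [h11_sum_counit_smul ra]
  have step2 : ∀ (i : ι) (j : κ),
      (∑ c ∈ (ral i).index, ∑ d ∈ (rbl j).index,
        antipode (R := k) ((ral i).left c * (rbl j).left d) *
          (((ral i).right c * (rbl j).right d) *
            (antipode (R := k) (rb.right j) * antipode (R := k) (ra.right i))))
      = counit (R := k) (ra.left i) • (counit (R := k) (rb.left j) •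
          (antipode (R := k) (rb.right j) * antipode (R := k) (ra.right i))) := by
    intro i j
    have hx : Coalgebra.comul (R := k) (ra.left i * rb.left j)
        = ∑ c ∈ (ral i).index, ∑ d ∈ (rbl j).index,
            ((ral i).left c * (rbl j).left d) ⊗ₜ[k] ((ral i).right c * (rbl j).right d) := by
      rw [Bialgebra.comul_mul, ← (ral i).eq, ← (rbl j).eq, Finset.sum_mul_sum]
      simp [Algebra.TensorProduct.tmul_mul_tmul]
    have hcd : (∑ c ∈ (ral i).index, ∑ d ∈ (rbl j).index,
        antipode (R := k) ((ral i).left c * (rbl j).left d) *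
          ((ral i).right c * (rbl j).right d))
        = algebraMap k A (counit (R := k) (ra.left i * rb.left j)) := by
      have h := mul_antipode_rTensor_comul_apply (R := k) (ra.left i * rb.left j)
      rw [hx] at h
      simpa [map_sum] using h
    calc (∑ c ∈ (ral i).index, ∑ d ∈ (rbl j).index,
        antipode (R := k) ((ral i).left c * (rbl j).left d) *
          (((ral i).right c * (rbl j).right d) *
            (antipode (R := k) (rb.right j) * antipode (R := k) (ra.right i))))
        = (∑ c ∈ (ral i).index, ∑ d ∈ (rbl j).index,
            antipode (R := k) ((ral i).left c * (rbl j).left d) *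
              ((ral i).right c * (rbl j).right d)) *
            (antipode (R := k) (rb.right j) * antipode (R := k) (ra.right i)) := by
          rw [Finset.sum_mul]
          refine Finset.sum_congr rfl fun c _ => ?_
          rw [Finset.sum_mul]
          exact Finset.sum_congr rfl fun d _ => (mul_assoc _ _ _).symm
      _ = algebraMap k A (counit (R := k) (ra.left i * rb.left j)) *
            (antipode (R := k) (rb.right j) * antipode (R := k) (ra.right i)) := by rw [hcd]
      _ = counit (R := k) (ra.left i) • (counit (R := k) (rb.left j) •
            (antipode (R := k) (rb.right j) * antipode (R := k) (ra.right i))) := by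
          rw [Bialgebra.counit_mul, map_mul, mul_assoc, ← Algebra.smul_def, ← Algebra.smul_def]
  have step3 : ∀ (i : ι),
      (∑ j ∈ rb.index, counit (R := k) (ra.left i) • (counit (R := k) (rb.left j) •
        (antipode (R := k) (rb.right j) * antipode (R := k) (ra.right i))))
      = counit (R := k) (ra.left i) • (antipode (R := k) b * antipode (R := k) (ra.right i)) := by
    intro i
    rw [← Finset.smul_sum]
    congr 1
    rw [Finset.sum_congr rfl fun j _ => (smul_mul_assoc _ _ _).symm, ← Finset.sum_mul, hSb]
  have step4 : (∑ i ∈ ra.index, counit (R := k) (ra.left i) •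
      (antipode (R := k) b * antipode (R := k) (ra.right i)))
      = antipode (R := k) b * antipode (R := k) a := by
    rw [Finset.sum_congr rfl fun i _ => (mul_smul_comm _ _ _).symm, ← Finset.mul_sum, hSa]
  calc (∑ i ∈ ra.index, ∑ c ∈ (ral i).index, ∑ j ∈ rb.index, ∑ d ∈ (rbl j).index,
      antipode (R := k) ((ral i).left c * (rbl j).left d) *
        (((ral i).right c * (rbl j).right d) *
          (antipode (R := k) (rb.right j) * antipode (R := k) (ra.right i))))
      = ∑ i ∈ ra.index, ∑ j ∈ rb.index, ∑ c ∈ (ral i).index, ∑ d ∈ (rbl j).index,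
          antipode (R := k) ((ral i).left c * (rbl j).left d) *
            (((ral i).right c * (rbl j).right d) *
              (antipode (R := k) (rb.right j) * antipode (R := k) (ra.right i))) :=
        Finset.sum_congr rfl fun i _ => Finset.sum_comm
    _ = ∑ i ∈ ra.index, ∑ j ∈ rb.index, counit (R := k) (ra.left i) •
          (counit (R := k) (rb.left j) •
            (antipode (R := k) (rb.right j) * antipode (R := k) (ra.right i))) :=
        Finset.sum_congr rfl fun i _ => Finset.sum_congr rfl fun j _ => step2 i j
    _ = ∑ i ∈ ra.index, counit (R := k) (ra.left i) •
          (antipode (R := k) b * antipode (R := k) (ra.right i)) :=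
        Finset.sum_congr rfl fun i _ => step3 i
    _ = antipode (R := k) b * antipode (R := k) a := step4

lemma h11_sum_swap {M : Type*} [AddCommMonoid M] {α β : Type*} (s : Finset α) (t : Finset β)
    {γ : α → Type*} {δ : β → Type*} (u : ∀ a, Finset (γ a)) (v : ∀ b, Finset (δ b))
    (f : ∀ (a : α), γ a → ∀ (b : β), δ b → M) :
    (∑ b ∈ t, ∑ d ∈ v b, ∑ a ∈ s, ∑ c ∈ u a, f a c b d)
      = ∑ a ∈ s, ∑ c ∈ u a, ∑ b ∈ t, ∑ d ∈ v b, f a c b d := by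
  calc (∑ b ∈ t, ∑ d ∈ v b, ∑ a ∈ s, ∑ c ∈ u a, f a c b d)
      = ∑ b ∈ t, ∑ a ∈ s, ∑ d ∈ v b, ∑ c ∈ u a, f a c b d :=
        Finset.sum_congr rfl fun b _ => Finset.sum_comm
    _ = ∑ a ∈ s, ∑ b ∈ t, ∑ d ∈ v b, ∑ c ∈ u a, f a c b d := Finset.sum_comm
    _ = ∑ a ∈ s, ∑ b ∈ t, ∑ c ∈ u a, ∑ d ∈ v b, f a c b d :=
        Finset.sum_congr rfl fun a _ => Finset.sum_congr rfl fun b _ => Finset.sum_comm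
    _ = ∑ a ∈ s, ∑ c ∈ u a, ∑ b ∈ t, ∑ d ∈ v b, f a c b d :=
        Finset.sum_congr rfl fun a _ => Finset.sum_comm

lemma h11_antipode_mul (a b : A) :
    antipode (R := k) (a * b) = antipode (R := k) b * antipode (R := k) a := by
  let S : A →ₗ[k] A := antipode (R := k)
  let K : (A ⊗[k] (A ⊗[k] A)) ⊗[k] (A ⊗[k] (A ⊗[k] A)) →ₗ[k] A :=
    (LinearMap.mul' k A ∘ₗ TensorProduct.map LinearMap.id (LinearMap.mul' k A)) ∘ₗ
    TensorProduct.map (S ∘ₗ LinearMap.mul' k A)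
      (TensorProduct.map (LinearMap.mul' k A)
        (LinearMap.mul' k A ∘ₗ TensorProduct.map S S ∘ₗ
          (TensorProduct.comm k A A).toLinearMap)) ∘ₗ
    LinearMap.lTensor (A ⊗[k] A) (TensorProduct.tensorTensorTensorComm k A A A A).toLinearMap ∘ₗ
    (TensorProduct.tensorTensorTensorComm k A (A ⊗[k] A) A (A ⊗[k] A)).toLinearMap
  have hKapp : ∀ (x1 x2 x3 y1 y2 y3 : A),
      K ((x1 ⊗ₜ[k] (x2 ⊗ₜ[k] x3)) ⊗ₜ[k] (y1 ⊗ₜ[k] (y2 ⊗ₜ[k] y3)))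
        = antipode (R := k) (x1 * y1) *
            ((x2 * y2) * (antipode (R := k) y3 * antipode (R := k) x3)) := by
    intro x1 x2 x3 y1 y2 y3
    simp [K, S, TensorProduct.tensorTensorTensorComm_tmul]
  have Ea := sum_tmul_tmul_eq (ℛ k a) (fun i => ℛ k ((ℛ k a).left i))
    (fun i => ℛ k ((ℛ k a).right i))
  have Eb := sum_tmul_tmul_eq (ℛ k b) (fun j => ℛ k ((ℛ k b).left j))
    (fun j => ℛ k ((ℛ k b).right j))
  have key := congrArg₂ (fun u v => K (u ⊗ₜ[k] v)) Ea Eb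
  simp only [TensorProduct.sum_tmul, TensorProduct.tmul_sum, map_sum, hKapp] at key
  rw [h11_sum_swap (ℛ k a).index (ℛ k b).index, h11_sum_swap (ℛ k a).index (ℛ k b).index]
    at key
  rw [h11_antipode_mul_aux_left (ℛ k a) (ℛ k b) _ _,
    h11_antipode_mul_aux_right (ℛ k a) (ℛ k b) _ _] at key
  exact key.symm

end hopf

end Hopf11Infra

section Hopf11Parts

open Coalgebra HopfAlgebra TensorProduct

variable {k I H : Type*} [Field k] [Ring I] [Ring H]
  [HopfAlgebra k I] [HopfAlgebra k H]
  (p : I →ₐc[k] H) (i : H →ₐc[k] I)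

lemma h11_fker_eq : fker p i =
    h11conv LinearMap.id (i.toLinearMap ∘ₗ p.toLinearMap ∘ₗ HopfAlgebra.antipode (R := k)) :=
  rfl

lemma h11_gker_eq : gker p i =
    h11conv (i.toLinearMap ∘ₗ p.toLinearMap) (HopfAlgebra.antipode (R := k)) :=
  rfl

lemma h11_fker_repr {v : I} {ι : Type*} (r : Repr k v ι) :
    fker p i v = ∑ a ∈ r.index, r.left a * i (p (antipode (R := k) (r.right a))) := by
  rw [h11_fker_eq, h11conv_repr _ _ r]
  rfl

lemma h11_gker_repr {v : I} {ι : Type*} (r : Repr k v ι) :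
    gker p i v = ∑ a ∈ r.index, i (p (r.left a)) * antipode (R := k) (r.right a) := by
  rw [h11_gker_eq, h11conv_repr _ _ r]
  rfl

lemma h11_part2 (v : I) (hv : v ∈ RKer k p) : fker p i v = v := by
  have hmap : TensorProduct.map (LinearMap.id : I →ₗ[k] I)
        (i.toLinearMap ∘ₗ p.toLinearMap ∘ₗ HopfAlgebra.antipode (R := k))
      = TensorProduct.map LinearMap.id (i.toLinearMap ∘ₗ HopfAlgebra.antipode (R := k)) ∘ₗ
          TensorProduct.map LinearMap.id p.toLinearMap := by
    rw [← TensorProduct.map_comp]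
    congr 1
    ext w
    simp only [LinearMap.comp_apply]
    exact congrArg _ (h11_bialgHom_antipode p w)
  have hv' : TensorProduct.map (LinearMap.id : I →ₗ[k] I) p.toLinearMap
      (Coalgebra.comul (R := k) v) = v ⊗ₜ[k] (1 : H) := hv
  show (LinearMap.mul' k I) (TensorProduct.map LinearMap.id
    (i.toLinearMap ∘ₗ p.toLinearMap ∘ₗ HopfAlgebra.antipode (R := k))
      (Coalgebra.comul (R := k) v)) = v
  rw [hmap, LinearMap.comp_apply, hv']
  simp only [TensorProduct.map_tmul, LinearMap.mul'_apply, LinearMap.id_apply,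
    LinearMap.comp_apply, h11_antipode_one]
  show v * i 1 = v
  rw [map_one, mul_one]

section part1
variable (hpi : ∀ x : H, p (i x) = x)

lemma h11_Phi_toLinearMap :
    ((Algebra.TensorProduct.map (AlgHom.id k I) (p : I →ₐ[k] H)).comp
      (Bialgebra.comulAlgHom k I)).toLinearMap
    = TensorProduct.map LinearMap.id p.toLinearMap ∘ₗ Coalgebra.comul (R := k) := by
  rw [AlgHom.comp_toLinearMap]
  congr 1

lemma h11_Phi_eq_conv :
    TensorProduct.map (LinearMap.id : I →ₗ[k] I) p.toLinearMap ∘ₗ Coalgebra.comul (R := k)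
    = h11conv (Algebra.TensorProduct.includeLeft : I →ₐ[k] I ⊗[k] H).toLinearMap
        ((Algebra.TensorProduct.includeRight : H →ₐ[k] I ⊗[k] H).toLinearMap ∘ₗ
          p.toLinearMap) := by
  ext v
  rw [LinearMap.comp_apply, h11conv_repr _ _ (ℛ k v), ← (ℛ k v).eq, map_sum]
  simp [Algebra.TensorProduct.includeLeft_apply, Algebra.TensorProduct.includeRight_apply,
    Algebra.TensorProduct.tmul_mul_tmul]

lemma h11_comul_ip (w : I) :
    Coalgebra.comul (R := k) (i (p w))
      = TensorProduct.map i.toLinearMap i.toLinearMap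
          (TensorProduct.map p.toLinearMap p.toLinearMap (Coalgebra.comul (R := k) w)) := by
  have h1 := LinearMap.congr_fun (CoalgHomClass.map_comp_comul (R := k) p) w
  have h2 := LinearMap.congr_fun (CoalgHomClass.map_comp_comul (R := k) i) (p w)
  simp only [LinearMap.comp_apply, LinearMap.coe_coe] at h1 h2
  rw [← h2, ← h1]
  rfl

include hpi in
lemma h11_PhiPiS_eq_conv :
    (TensorProduct.map (LinearMap.id : I →ₗ[k] I) p.toLinearMap ∘ₗ Coalgebra.comul (R := k))
        ∘ₗ (i.toLinearMap ∘ₗ p.toLinearMap ∘ₗ HopfAlgebra.antipode (R := k))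
    = h11conv
        ((Algebra.TensorProduct.includeRight : H →ₐ[k] I ⊗[k] H).toLinearMap ∘ₗ
          p.toLinearMap ∘ₗ HopfAlgebra.antipode (R := k))
        ((Algebra.TensorProduct.includeLeft : I →ₐ[k] I ⊗[k] H).toLinearMap ∘ₗ
          i.toLinearMap ∘ₗ p.toLinearMap ∘ₗ HopfAlgebra.antipode (R := k)) := by
  ext v
  simp only [LinearMap.comp_apply]
  rw [h11conv_repr _ _ (ℛ k v)]
  have hS : Coalgebra.comul (R := k) (antipode (R := k) v)
      = ∑ a ∈ (ℛ k v).index, antipode (R := k) ((ℛ k v).right a) ⊗ₜ[k]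
          antipode (R := k) ((ℛ k v).left a) := h11_comul_antipode_repr (ℛ k v)
  rw [show (i.toLinearMap (p.toLinearMap (antipode (R := k) v)))
      = i (p (antipode (R := k) v)) from rfl, h11_comul_ip p i, hS, map_sum, map_sum, map_sum]
  simp only [TensorProduct.map_tmul, LinearMap.mul'_apply, LinearMap.comp_apply,
    LinearMap.id_apply, AlgHom.toLinearMap_apply, BialgHom.coe_toLinearMap,
    Algebra.TensorProduct.includeLeft_apply, Algebra.TensorProduct.includeRight_apply,
    Algebra.TensorProduct.tmul_mul_tmul, one_mul, mul_one]
  refine Finset.sum_congr rfl fun a _ => ?_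
  have hx : p.toLinearMap (i.toLinearMap (p.toLinearMap (antipode (R := k) ((ℛ k v).left a))))
      = p.toLinearMap (antipode (R := k) ((ℛ k v).left a)) := hpi _
  rw [hx]

lemma h11_conv_j2p_unit :
    h11conv
      ((Algebra.TensorProduct.includeRight : H →ₐ[k] I ⊗[k] H).toLinearMap ∘ₗ p.toLinearMap)
      ((Algebra.TensorProduct.includeRight : H →ₐ[k] I ⊗[k] H).toLinearMap ∘ₗ
        p.toLinearMap ∘ₗ HopfAlgebra.antipode (R := k))
    = h11unit := by
  have h := h11_algHom_comp_conv
    ((Algebra.TensorProduct.includeRight : H →ₐ[k] I ⊗[k] H).comp (p : I →ₐ[k] H))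
    (LinearMap.id (R := k) (M := I)) (antipode (R := k))
  rw [h11conv_id_antipode, h11_algHom_comp_unit, LinearMap.comp_id,
    AlgHom.comp_toLinearMap, LinearMap.comp_assoc] at h
  exact h.symm

include hpi in
lemma h11_part1f_map :
    (TensorProduct.map LinearMap.id p.toLinearMap ∘ₗ Coalgebra.comul (R := k)) ∘ₗ fker p i
      = (Algebra.TensorProduct.includeLeft : I →ₐ[k] I ⊗[k] H).toLinearMap ∘ₗ fker p i := by
  have h1 := h11_algHom_comp_conv
    ((Algebra.TensorProduct.map (AlgHom.id k I) (p : I →ₐ[k] H)).comp (Bialgebra.comulAlgHom k I))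
    (LinearMap.id (R := k) (M := I))
    (i.toLinearMap ∘ₗ p.toLinearMap ∘ₗ HopfAlgebra.antipode (R := k))
  rw [h11_Phi_toLinearMap, LinearMap.comp_id, ← h11_fker_eq] at h1
  rw [h1, h11_PhiPiS_eq_conv p i hpi, h11_Phi_eq_conv, h11conv_assoc, ← h11conv_assoc
    ((Algebra.TensorProduct.includeRight : H →ₐ[k] I ⊗[k] H).toLinearMap ∘ₗ p.toLinearMap),
    h11_conv_j2p_unit, h11conv_unit_left]
  have h2 := h11_algHom_comp_conv
    (Algebra.TensorProduct.includeLeft : I →ₐ[k] I ⊗[k] H)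
    (LinearMap.id (R := k) (M := I))
    (i.toLinearMap ∘ₗ p.toLinearMap ∘ₗ HopfAlgebra.antipode (R := k))
  rw [LinearMap.comp_id] at h2
  rw [← h2, ← h11_fker_eq]

include hpi in
lemma h11_part1f (v : I) : fker p i v ∈ RKer k p := by
  have h := LinearMap.congr_fun (h11_part1f_map p i hpi) v
  simp only [LinearMap.comp_apply] at h
  show TensorProduct.map LinearMap.id p.toLinearMap (Coalgebra.comul (R := k) (fker p i v))
    = fker p i v ⊗ₜ[k] 1
  rw [h]
  rfl

include hpi in
lemma h11_PhiPi_eq_conv :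
    (TensorProduct.map (LinearMap.id : I →ₗ[k] I) p.toLinearMap ∘ₗ Coalgebra.comul (R := k))
        ∘ₗ (i.toLinearMap ∘ₗ p.toLinearMap)
    = h11conv
        ((Algebra.TensorProduct.includeLeft : I →ₐ[k] I ⊗[k] H).toLinearMap ∘ₗ
          i.toLinearMap ∘ₗ p.toLinearMap)
        ((Algebra.TensorProduct.includeRight : H →ₐ[k] I ⊗[k] H).toLinearMap ∘ₗ
          p.toLinearMap) := by
  ext v
  simp only [LinearMap.comp_apply]
  rw [h11conv_repr _ _ (ℛ k v),
    show (i.toLinearMap (p.toLinearMap v)) = i (p v) from rfl, h11_comul_ip p i,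
    ← (ℛ k v).eq, map_sum, map_sum, map_sum]
  simp only [TensorProduct.map_tmul, LinearMap.mul'_apply, LinearMap.comp_apply,
    LinearMap.id_apply, AlgHom.toLinearMap_apply,
    Algebra.TensorProduct.includeLeft_apply, Algebra.TensorProduct.includeRight_apply,
    Algebra.TensorProduct.tmul_mul_tmul, one_mul, mul_one]
  refine Finset.sum_congr rfl fun a _ => ?_
  have hx : p.toLinearMap (i.toLinearMap (p.toLinearMap ((ℛ k v).right a)))
      = p.toLinearMap ((ℛ k v).right a) := hpi _
  rw [hx]

lemma h11_PhiS_eq_conv :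
    (TensorProduct.map (LinearMap.id : I →ₗ[k] I) p.toLinearMap ∘ₗ Coalgebra.comul (R := k))
        ∘ₗ HopfAlgebra.antipode (R := k)
    = h11conv
        ((Algebra.TensorProduct.includeRight : H →ₐ[k] I ⊗[k] H).toLinearMap ∘ₗ
          p.toLinearMap ∘ₗ HopfAlgebra.antipode (R := k))
        ((Algebra.TensorProduct.includeLeft : I →ₐ[k] I ⊗[k] H).toLinearMap ∘ₗ
          HopfAlgebra.antipode (R := k)) := by
  ext v
  simp only [LinearMap.comp_apply]
  rw [h11conv_repr _ _ (ℛ k v), h11_comul_antipode_repr (ℛ k v), map_sum]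
  simp [Algebra.TensorProduct.tmul_mul_tmul]

include hpi in
lemma h11_part1g_map :
    (TensorProduct.map LinearMap.id p.toLinearMap ∘ₗ Coalgebra.comul (R := k)) ∘ₗ gker p i
      = (Algebra.TensorProduct.includeLeft : I →ₐ[k] I ⊗[k] H).toLinearMap ∘ₗ gker p i := by
  have h1 := h11_algHom_comp_conv
    ((Algebra.TensorProduct.map (AlgHom.id k I) (p : I →ₐ[k] H)).comp (Bialgebra.comulAlgHom k I))
    (i.toLinearMap ∘ₗ p.toLinearMap) (HopfAlgebra.antipode (R := k) (A := I))
  rw [h11_Phi_toLinearMap, ← h11_gker_eq] at h1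
  rw [h1, h11_PhiPi_eq_conv p i hpi, h11_PhiS_eq_conv, h11conv_assoc, ← h11conv_assoc
    ((Algebra.TensorProduct.includeRight : H →ₐ[k] I ⊗[k] H).toLinearMap ∘ₗ p.toLinearMap),
    h11_conv_j2p_unit, h11conv_unit_left]
  have h2 := h11_algHom_comp_conv
    (Algebra.TensorProduct.includeLeft : I →ₐ[k] I ⊗[k] H)
    (i.toLinearMap ∘ₗ p.toLinearMap) (HopfAlgebra.antipode (R := k) (A := I))
  rw [← h2, ← h11_gker_eq]

include hpi in
lemma h11_part1g (v : I) : gker p i v ∈ RKer k p := by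
  have h := LinearMap.congr_fun (h11_part1g_map p i hpi) v
  simp only [LinearMap.comp_apply] at h
  show TensorProduct.map LinearMap.id p.toLinearMap (Coalgebra.comul (R := k) (gker p i v))
    = gker p i v ⊗ₜ[k] 1
  rw [h]
  rfl

end part1

section part3
variable (hpi : ∀ x : H, p (i x) = x)

lemma h11_comul_i (x : H) :
    Coalgebra.comul (R := k) (i x)
      = ∑ b ∈ (ℛ k x).index, i ((ℛ k x).left b) ⊗ₜ[k] i ((ℛ k x).right b) := by
  have h := LinearMap.congr_fun (CoalgHomClass.map_comp_comul (R := k) i) x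
  simp only [LinearMap.comp_apply, LinearMap.coe_coe] at h
  rw [← h, ← (ℛ k x).eq, map_sum]
  simp

include hpi in
lemma h11_part3a (v : I) (x : H) :
    fker p i (v * i x) = Coalgebra.counit (R := k) x • fker p i v := by
  have hcm : Coalgebra.comul (R := k) (v * i x)
      = ∑ a ∈ (ℛ k v).index, ∑ b ∈ (ℛ k x).index,
          ((ℛ k v).left a * i ((ℛ k x).left b)) ⊗ₜ[k]
            ((ℛ k v).right a * i ((ℛ k x).right b)) := by
    rw [Bialgebra.comul_mul, h11_comul_i i x, ← (ℛ k v).eq, Finset.sum_mul_sum]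
    simp [Algebra.TensorProduct.tmul_mul_tmul]
  have hf : fker p i (v * i x) = ∑ a ∈ (ℛ k v).index, ∑ b ∈ (ℛ k x).index,
      ((ℛ k v).left a * i ((ℛ k x).left b)) *
        i (p (antipode (R := k) ((ℛ k v).right a * i ((ℛ k x).right b)))) := by
    show (LinearMap.mul' k I) (TensorProduct.map LinearMap.id
      (i.toLinearMap ∘ₗ p.toLinearMap ∘ₗ HopfAlgebra.antipode (R := k))
        (Coalgebra.comul (R := k) (v * i x))) = _
    rw [hcm]
    simp only [map_sum, TensorProduct.map_tmul, LinearMap.mul'_apply, LinearMap.comp_apply,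
      LinearMap.id_apply]
    exact Finset.sum_congr rfl fun a _ => Finset.sum_congr rfl fun b _ => rfl
  have hterm : ∀ (a : (I × I)) (b : (H × H)),
      ((ℛ k v).left a * i ((ℛ k x).left b)) *
        i (p (antipode (R := k) ((ℛ k v).right a * i ((ℛ k x).right b))))
      = (ℛ k v).left a * (i ((ℛ k x).left b * antipode (R := k) ((ℛ k x).right b)) *
          i (p (antipode (R := k) ((ℛ k v).right a)))) := by
    intro a b
    rw [h11_antipode_mul, ← h11_bialgHom_antipode i ((ℛ k x).right b), map_mul p, hpi,
      map_mul i, map_mul i ((ℛ k x).left b), mul_assoc, ← mul_assoc (i ((ℛ k x).left b))]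
  have hsum_b : ∀ a : (I × I),
      (∑ b ∈ (ℛ k x).index, (ℛ k v).left a *
        (i ((ℛ k x).left b * antipode (R := k) ((ℛ k x).right b)) *
          i (p (antipode (R := k) ((ℛ k v).right a)))))
      = Coalgebra.counit (R := k) x •
          ((ℛ k v).left a * i (p (antipode (R := k) ((ℛ k v).right a)))) := by
    intro a
    rw [← Finset.mul_sum, ← Finset.sum_mul, ← map_sum, sum_mul_antipode_eq_algebraMap_counit (ℛ k x),
      AlgHomClass.commutes, ← Algebra.smul_def, mul_smul_comm]
  rw [hf, Finset.sum_congr rfl fun a _ => Finset.sum_congr rfl fun b _ => hterm a b,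
    Finset.sum_congr rfl fun a _ => hsum_b a, ← Finset.smul_sum,
    ← h11_fker_repr p i (ℛ k v)]

lemma h11_adT_repr (c w : I) {ι : Type*} (rc : Repr k c ι) :
    adT k I (c ⊗ₜ[k] w) = ∑ b ∈ rc.index, rc.left b * (w * antipode (R := k) (rc.right b)) := by
  show ((LinearMap.mul' k I)
    ∘ₗ (TensorProduct.map LinearMap.id (LinearMap.mul' k I))
    ∘ₗ (TensorProduct.map LinearMap.id
          (TensorProduct.map LinearMap.id (HopfAlgebra.antipode (R := k))))
    ∘ₗ (TensorProduct.map LinearMap.id (TensorProduct.comm k I I).toLinearMap)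
    ∘ₗ (TensorProduct.assoc k I I I).toLinearMap
    ∘ₗ (TensorProduct.map (Coalgebra.comul (R := k)) LinearMap.id)) (c ⊗ₜ[k] w) = _
  simp only [LinearMap.comp_apply, TensorProduct.map_tmul, LinearMap.id_apply]
  rw [← rc.eq, TensorProduct.sum_tmul, map_sum, map_sum, map_sum, map_sum, map_sum]
  simp only [TensorProduct.assoc_tmul, TensorProduct.map_tmul, LinearMap.id_apply,
    LinearEquiv.coe_coe, TensorProduct.comm_tmul, LinearMap.mul'_apply]

include hpi in
lemma h11_part3b (v : I) (x : H) :
    fker p i (i x * v) = adT k I ((i x) ⊗ₜ[k] (fker p i v)) := by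
  have hcm : Coalgebra.comul (R := k) (i x * v)
      = ∑ b ∈ (ℛ k x).index, ∑ a ∈ (ℛ k v).index,
          (i ((ℛ k x).left b) * (ℛ k v).left a) ⊗ₜ[k]
            (i ((ℛ k x).right b) * (ℛ k v).right a) := by
    rw [Bialgebra.comul_mul, h11_comul_i i x, ← (ℛ k v).eq, Finset.sum_mul_sum]
    simp [Algebra.TensorProduct.tmul_mul_tmul]
  have hf : fker p i (i x * v) = ∑ b ∈ (ℛ k x).index, ∑ a ∈ (ℛ k v).index,
      (i ((ℛ k x).left b) * (ℛ k v).left a) *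
        i (p (antipode (R := k) (i ((ℛ k x).right b) * (ℛ k v).right a))) := by
    show (LinearMap.mul' k I) (TensorProduct.map LinearMap.id
      (i.toLinearMap ∘ₗ p.toLinearMap ∘ₗ HopfAlgebra.antipode (R := k))
        (Coalgebra.comul (R := k) (i x * v))) = _
    rw [hcm]
    simp only [map_sum, TensorProduct.map_tmul, LinearMap.mul'_apply, LinearMap.comp_apply,
      LinearMap.id_apply]
    exact Finset.sum_congr rfl fun b _ => Finset.sum_congr rfl fun a _ => rfl
  have hterm : ∀ (b : (H × H)) (a : (I × I)),
      (i ((ℛ k x).left b) * (ℛ k v).left a) *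
        i (p (antipode (R := k) (i ((ℛ k x).right b) * (ℛ k v).right a)))
      = i ((ℛ k x).left b) * (((ℛ k v).left a *
          i (p (antipode (R := k) ((ℛ k v).right a)))) * i (antipode (R := k) ((ℛ k x).right b))) := by
    intro b a
    rw [h11_antipode_mul, ← h11_bialgHom_antipode i ((ℛ k x).right b), map_mul p, hpi,
      map_mul i, mul_assoc, ← mul_assoc ((ℛ k v).left a)]
  have hsum_a : ∀ b : (H × H),
      (∑ a ∈ (ℛ k v).index, i ((ℛ k x).left b) * (((ℛ k v).left a *
          i (p (antipode (R := k) ((ℛ k v).right a)))) * i (antipode (R := k) ((ℛ k x).right b))))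
      = i ((ℛ k x).left b) * (fker p i v * i (antipode (R := k) ((ℛ k x).right b))) := by
    intro b
    rw [← Finset.mul_sum, ← Finset.sum_mul, ← h11_fker_repr p i (ℛ k v)]
  rw [hf, Finset.sum_congr rfl fun b _ => Finset.sum_congr rfl fun a _ => hterm b a,
    Finset.sum_congr rfl fun b _ => hsum_a b, h11_adT_repr (i x) (fker p i v) (h11ReprMap i (ℛ k x))]
  refine Finset.sum_congr rfl fun b _ => ?_
  rw [show (h11ReprMap i (ℛ k x)).left b = i ((ℛ k x).left b) from rfl,
    show (h11ReprMap i (ℛ k x)).right b = i ((ℛ k x).right b) from rfl,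
    h11_bialgHom_antipode i ((ℛ k x).right b)]

include hpi in
lemma h11_part4 (v : I) : gker p i (fker p i v) = gker p i v := by
  have hcomul_ipS : ∀ a : (I × I),
      Coalgebra.comul (R := k) (i (p (antipode (R := k) ((ℛ k v).right a))))
      = ∑ c ∈ (ℛ k ((ℛ k v).right a)).index,
          i (p (antipode (R := k) ((ℛ k ((ℛ k v).right a)).right c))) ⊗ₜ[k]
            i (p (antipode (R := k) ((ℛ k ((ℛ k v).right a)).left c))) := by
    intro a
    rw [h11_comul_ip p i, h11_comul_antipode_repr (ℛ k ((ℛ k v).right a)), map_sum, map_sum]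
    simp only [TensorProduct.map_tmul]
    exact Finset.sum_congr rfl fun c _ => rfl
  have hcm : Coalgebra.comul (R := k) (fker p i v)
      = ∑ a ∈ (ℛ k v).index, ∑ b ∈ (ℛ k ((ℛ k v).left a)).index,
          ∑ c ∈ (ℛ k ((ℛ k v).right a)).index,
          ((ℛ k ((ℛ k v).left a)).left b *
            i (p (antipode (R := k) ((ℛ k ((ℛ k v).right a)).right c)))) ⊗ₜ[k]
          ((ℛ k ((ℛ k v).left a)).right b *
            i (p (antipode (R := k) ((ℛ k ((ℛ k v).right a)).left c)))) := by
    rw [h11_fker_repr p i (ℛ k v), map_sum]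
    refine Finset.sum_congr rfl fun a _ => ?_
    rw [Bialgebra.comul_mul, hcomul_ipS a, ← (ℛ k ((ℛ k v).left a)).eq, Finset.sum_mul_sum]
    simp [Algebra.TensorProduct.tmul_mul_tmul]
  have hg : gker p i (fker p i v)
      = ∑ a ∈ (ℛ k v).index, ∑ b ∈ (ℛ k ((ℛ k v).left a)).index,
          ∑ c ∈ (ℛ k ((ℛ k v).right a)).index,
          i (p ((ℛ k ((ℛ k v).left a)).left b *
            i (p (antipode (R := k) ((ℛ k ((ℛ k v).right a)).right c))))) *
          antipode (R := k) ((ℛ k ((ℛ k v).left a)).right b *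
            i (p (antipode (R := k) ((ℛ k ((ℛ k v).right a)).left c)))) := by
    show (LinearMap.mul' k I) (TensorProduct.map (i.toLinearMap ∘ₗ p.toLinearMap)
      (HopfAlgebra.antipode (R := k)) (Coalgebra.comul (R := k) (fker p i v))) = _
    rw [hcm]
    simp only [map_sum, TensorProduct.map_tmul, LinearMap.mul'_apply, LinearMap.comp_apply]
    exact Finset.sum_congr rfl fun a _ => Finset.sum_congr rfl fun b _ =>
      Finset.sum_congr rfl fun c _ => rfl
  have hterm : ∀ (a : (I × I)) (b : (I × I))
      (c : (I × I)),
      i (p ((ℛ k ((ℛ k v).left a)).left b *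
        i (p (antipode (R := k) ((ℛ k ((ℛ k v).right a)).right c))))) *
      antipode (R := k) ((ℛ k ((ℛ k v).left a)).right b *
        i (p (antipode (R := k) ((ℛ k ((ℛ k v).right a)).left c))))
      = i (p ((ℛ k ((ℛ k v).left a)).left b)) *
          ((i (p (antipode (R := k) ((ℛ k ((ℛ k v).right a)).right c))) *
            i (p (antipode (R := k) (antipode (R := k) ((ℛ k ((ℛ k v).right a)).left c))))) *
            antipode (R := k) ((ℛ k ((ℛ k v).left a)).right b)) := by
    intro a b c
    rw [map_mul p, hpi, map_mul i, h11_antipode_mul,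
      ← h11_bialgHom_antipode i (p (antipode (R := k) ((ℛ k ((ℛ k v).right a)).left c))),
      ← h11_bialgHom_antipode p (antipode (R := k) ((ℛ k ((ℛ k v).right a)).left c)),
      mul_assoc, ← mul_assoc (i (p (antipode (R := k) ((ℛ k ((ℛ k v).right a)).right c))))]
  have hsum_c : ∀ (a : (I × I)) (b : (I × I)),
      (∑ c ∈ (ℛ k ((ℛ k v).right a)).index,
        i (p ((ℛ k ((ℛ k v).left a)).left b)) *
          ((i (p (antipode (R := k) ((ℛ k ((ℛ k v).right a)).right c))) *
            i (p (antipode (R := k) (antipode (R := k) ((ℛ k ((ℛ k v).right a)).left c))))) *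
            antipode (R := k) ((ℛ k ((ℛ k v).left a)).right b)))
      = counit (R := k) ((ℛ k v).right a) • (i (p ((ℛ k ((ℛ k v).left a)).left b)) *
          antipode (R := k) ((ℛ k ((ℛ k v).left a)).right b)) := by
    intro a b
    have hcc : (∑ c ∈ (ℛ k ((ℛ k v).right a)).index,
        i (p (antipode (R := k) ((ℛ k ((ℛ k v).right a)).right c))) *
          i (p (antipode (R := k) (antipode (R := k) ((ℛ k ((ℛ k v).right a)).left c)))))
        = algebraMap k I (counit (R := k) ((ℛ k v).right a)) := by
      have h1 : ∀ c : (I × I),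
          i (p (antipode (R := k) ((ℛ k ((ℛ k v).right a)).right c))) *
            i (p (antipode (R := k) (antipode (R := k) ((ℛ k ((ℛ k v).right a)).left c))))
          = i (p (antipode (R := k) (antipode (R := k) ((ℛ k ((ℛ k v).right a)).left c) *
              (ℛ k ((ℛ k v).right a)).right c))) := by
        intro c
        rw [h11_antipode_mul, map_mul p, map_mul i]
      rw [Finset.sum_congr rfl fun c _ => h1 c, ← map_sum, ← map_sum, ← map_sum,
        sum_antipode_mul_eq_algebraMap_counit (ℛ k ((ℛ k v).right a)),
        Algebra.algebraMap_eq_smul_one, map_smul, h11_antipode_one, map_smul, map_smul,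
        map_one p, map_one i, ← Algebra.algebraMap_eq_smul_one]
    rw [← Finset.mul_sum, ← Finset.sum_mul, hcc, ← Algebra.smul_def, mul_smul_comm]
  have hsum_b : ∀ a : (I × I),
      (∑ b ∈ (ℛ k ((ℛ k v).left a)).index,
        counit (R := k) ((ℛ k v).right a) • (i (p ((ℛ k ((ℛ k v).left a)).left b)) *
          antipode (R := k) ((ℛ k ((ℛ k v).left a)).right b)))
      = counit (R := k) ((ℛ k v).right a) • gker p i ((ℛ k v).left a) := by
    intro a
    rw [← Finset.smul_sum, ← h11_gker_repr p i (ℛ k ((ℛ k v).left a))]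
  rw [hg, Finset.sum_congr rfl fun a _ => Finset.sum_congr rfl fun b _ =>
      Finset.sum_congr rfl fun c _ => hterm a b c,
    Finset.sum_congr rfl fun a _ => Finset.sum_congr rfl fun b _ => hsum_c a b,
    Finset.sum_congr rfl fun a _ => hsum_b a]
  simp only [← map_smul, ← map_sum]
  rw [h11_sum_smul_counit (ℛ k v)]

end part3

end Hopf11Parts

/-- for a Hopf algebra projection `(∂ : I → H, i)` with kernel generator
maps `f, g` and `B = RKer(∂)`:
(i) `f` and `g` take values in `B`;
(ii) `f` restricted to `B` is the identity, so `f ∘ f = f`;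
(iii) `f(v · i(x)) = ε(x) f(v)` and `f(i(x) · v) = i(x) ▷_ad f(v)`;
(iv) `g ∘ f = g`. -/
theorem kernel_generator_properties {k I H : Type*} [Field k] [Ring I] [Ring H]
    [HopfAlgebra k I] [HopfAlgebra k H]
    (p : I →ₐc[k] H) (i : H →ₐc[k] I) (hpi : ∀ x : H, p (i x) = x) :
    (∀ v : I, fker p i v ∈ RKer k p ∧ gker p i v ∈ RKer k p) ∧
    (∀ v : I, v ∈ RKer k p → fker p i v = v) ∧
    (∀ v : I, fker p i (fker p i v) = fker p i v) ∧
    (∀ (v : I) (x : H),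
      fker p i (v * i x) = (Coalgebra.counit (R := k) x) • fker p i v) ∧
    (∀ (v : I) (x : H),
      fker p i (i x * v) = adT k I ((i x) ⊗ₜ[k] (fker p i v))) ∧
    (∀ v : I, gker p i (fker p i v) = gker p i v) :=
  ⟨fun v => ⟨h11_part1f p i hpi v, h11_part1g p i hpi v⟩,
    fun v hv => h11_part2 p i v hv,
    fun v => h11_part2 p i (fker p i v) (h11_part1f p i hpi v),
    fun v x => h11_part3a p i hpi v x,
    fun v x => h11_part3b p i hpi v x,
    fun v => h11_part4 p i hpi v⟩
end

section
/- Let (∂ : I → H, i) be a Hopf algebra projection over a field k with kernel generator maps f, g : I → I. Then the braided adjoint action coincides with the ordinary adjoint action: for all x, y ∈ I, Σ f(x') · (i(∂(x'')) ▷_ad y) · g(x''') = x ▷_ad y = Σ x' y S(x''). -/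
open TensorProduct

section ConvSection

open Coalgebra

variable {k A : Type*} [CommSemiring k] [Semiring A] [HopfAlgebra k A]

/-- Convolution product of linear endomaps of a Hopf algebra. -/
noncomputable def conv (φ ψ : A →ₗ[k] A) : A →ₗ[k] A :=
  LinearMap.mul' k A ∘ₗ TensorProduct.map φ ψ ∘ₗ Coalgebra.comul

lemma conv_repr (φ ψ : A →ₗ[k] A) {x : A} {ι : Type*} (r : Coalgebra.Repr k x ι) :
    conv φ ψ x = ∑ i ∈ r.index, φ (r.left i) * ψ (r.right i) := by
  simp [conv, ← r.eq, map_sum]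

lemma conv_assoc (φ ψ θ : A →ₗ[k] A) :
    conv (conv φ ψ) θ = conv φ (conv ψ θ) := by
  ext x
  let r := ℛ k x
  let a₁ : (i : r.ι) → Repr k (r.left i) (A × A) := fun i => ℛ k (r.left i)
  let a₂ : (i : r.ι) → Repr k (r.right i) (A × A) := fun i => ℛ k (r.right i)
  have key := Coalgebra.sum_map_tmul_tmul_eq (R := k) (A := A) (B := A)
    (F := A →ₗ[k] A) φ ψ θ x (repr := r) (a₁ := a₁) (a₂ := a₂)
  apply_fun (LinearMap.mul' k A ∘ₗ LinearMap.lTensor A (LinearMap.mul' k A)) at key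
  simp only [map_sum, LinearMap.comp_apply, LinearMap.lTensor_tmul,
    LinearMap.mul'_apply] at key
  rw [conv_repr _ _ r, conv_repr _ _ r]
  calc ∑ i ∈ r.index, conv φ ψ (r.left i) * θ (r.right i)
      = ∑ i ∈ r.index, ∑ j ∈ (a₁ i).index,
          φ ((a₁ i).left j) * (ψ ((a₁ i).right j) * θ (r.right i)) := by
        refine Finset.sum_congr rfl fun i _ => ?_
        rw [conv_repr _ _ (a₁ i), Finset.sum_mul]
        exact Finset.sum_congr rfl fun j _ => mul_assoc _ _ _
    _ = ∑ i ∈ r.index, φ (r.left i) * conv ψ θ (r.right i) := by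
        rw [← key]
        refine Finset.sum_congr rfl fun i _ => ?_
        rw [conv_repr _ _ (a₂ i), Finset.mul_sum]

lemma conv_unit_left (ψ : A →ₗ[k] A) :
    conv ((Algebra.linearMap k A) ∘ₗ Coalgebra.counit) ψ = ψ := by
  ext x
  let r := ℛ k x
  have key := Coalgebra.sum_counit_tmul_map_eq (R := k) (A := A) (B := A)
    (F := A →ₗ[k] A) ψ x (repr := r)
  apply_fun (TensorProduct.lid k A) at key
  simp only [map_sum, lid_tmul, one_smul] at key
  rw [conv_repr _ _ r]
  simpa [Algebra.smul_def] using key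

lemma conv_antipode_left :
    conv (HopfAlgebra.antipode (R := k) (A := A)) LinearMap.id
      = (Algebra.linearMap k A) ∘ₗ Coalgebra.counit := by
  ext x
  rw [conv_repr _ _ (ℛ k x)]
  simpa using HopfAlgebra.sum_antipode_mul_eq_algebraMap_counit (ℛ k x)

lemma conv_precomp (φ ψ T : A →ₗ[k] A)
    (hT : Coalgebra.comul ∘ₗ T = TensorProduct.map T T ∘ₗ Coalgebra.comul) :
    conv φ ψ ∘ₗ T = conv (φ ∘ₗ T) (ψ ∘ₗ T) := by
  unfold conv
  rw [LinearMap.comp_assoc, LinearMap.comp_assoc, hT,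
    ← LinearMap.comp_assoc Coalgebra.comul (TensorProduct.map T T) (TensorProduct.map φ ψ),
    ← TensorProduct.map_comp]

lemma conv_postcomp (φ ψ T : A →ₗ[k] A)
    (hmul : ∀ a b : A, T (a * b) = T a * T b) :
    T ∘ₗ conv φ ψ = conv (T ∘ₗ φ) (T ∘ₗ ψ) := by
  ext x
  rw [LinearMap.comp_apply, conv_repr _ _ (ℛ k x), conv_repr _ _ (ℛ k x), map_sum]
  exact Finset.sum_congr rfl fun i _ => hmul _ _

lemma conv_mulLeft (y : A) (φ ψ : A →ₗ[k] A) :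
    conv (LinearMap.mulLeft k y ∘ₗ φ) ψ = LinearMap.mulLeft k y ∘ₗ conv φ ψ := by
  ext x
  rw [LinearMap.comp_apply, conv_repr _ _ (ℛ k x), conv_repr _ _ (ℛ k x),
    LinearMap.mulLeft_apply, Finset.mul_sum]
  exact Finset.sum_congr rfl fun i _ => by simp [mul_assoc]

end ConvSection

section Aux

open Coalgebra

variable {k I H : Type*} [Field k] [Ring I] [Ring H]
    [HopfAlgebra k I] [HopfAlgebra k H] (p : I →ₐc[k] H) (i : H →ₐc[k] I)

lemma comul_comp_Tm :
    Coalgebra.comul ∘ₗ (i.toLinearMap ∘ₗ p.toLinearMap)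
      = TensorProduct.map (i.toLinearMap ∘ₗ p.toLinearMap) (i.toLinearMap ∘ₗ p.toLinearMap)
          ∘ₗ Coalgebra.comul := by
  have hi : TensorProduct.map i.toLinearMap i.toLinearMap ∘ₗ Coalgebra.comul
      = Coalgebra.comul ∘ₗ i.toLinearMap := CoalgHomClass.map_comp_comul (R := k) i
  have hp : TensorProduct.map p.toLinearMap p.toLinearMap ∘ₗ Coalgebra.comul
      = Coalgebra.comul ∘ₗ p.toLinearMap := CoalgHomClass.map_comp_comul (R := k) p
  rw [show (Coalgebra.comul ∘ₗ (i.toLinearMap ∘ₗ p.toLinearMap) : I →ₗ[k] I ⊗[k] I)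
      = (Coalgebra.comul ∘ₗ i.toLinearMap) ∘ₗ p.toLinearMap from rfl,
    ← hi, LinearMap.comp_assoc, ← hp, ← LinearMap.comp_assoc, ← TensorProduct.map_comp]

lemma Tm_mul : ∀ a b : I,
    (i.toLinearMap ∘ₗ p.toLinearMap) (a * b)
      = (i.toLinearMap ∘ₗ p.toLinearMap) a * (i.toLinearMap ∘ₗ p.toLinearMap) b := by
  intro a b; show i (p (a*b)) = i (p a) * i (p b); simp

lemma Tm_comp_linearMap :
    (i.toLinearMap ∘ₗ p.toLinearMap) ∘ₗ Algebra.linearMap k I = Algebra.linearMap k I := by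
  refine LinearMap.ext fun c => ?_
  show i (p ((algebraMap k I) c)) = algebraMap k I c
  rw [AlgHomClass.commutes p, AlgHomClass.commutes i]

lemma counit_comp_Tm :
    Coalgebra.counit ∘ₗ (i.toLinearMap ∘ₗ p.toLinearMap) = (Coalgebra.counit : I →ₗ[k] k) := by
  ext x
  show Coalgebra.counit (i (p x)) = Coalgebra.counit x
  rw [CoalgHomClass.counit_comp_apply (R:=k) i, CoalgHomClass.counit_comp_apply (R:=k) p]

end Aux

open Coalgebra in
lemma adT_comp_mkFlip {k I : Type*} [Field k] [Ring I] [HopfAlgebra k I] (y : I) : adT k I ∘ₗ (TensorProduct.mk k I I).flip y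
    = conv LinearMap.id (LinearMap.mulLeft k y ∘ₗ HopfAlgebra.antipode (R := k)) := by
  ext x
  simp only [LinearMap.comp_apply, TensorProduct.mk_apply, LinearMap.flip_apply]
  rw [adT, conv]
  simp only [LinearMap.comp_apply, TensorProduct.map_tmul, LinearMap.id_coe, id_eq]
  rw [← (ℛ k x).eq]
  simp [TensorProduct.sum_tmul, map_sum, Finset.sum_mul, mul_assoc]

/-- for a Hopf algebra projection `(∂ : I → H, i)`, the braided adjoint
action coincides with the ordinary adjoint action:
`Σ f(x') · (i(∂(x'')) ▷_ad y) · g(x''') = x ▷_ad y = Σ x' y S(x'')`. -/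
theorem braided_adjoint_eq_adjoint {k I H : Type*} [Field k] [Ring I] [Ring H]
    [HopfAlgebra k I] [HopfAlgebra k H]
    (p : I →ₐc[k] H) (i : H →ₐc[k] I) (hpi : ∀ x : H, p (i x) = x) (x y : I) :
    LinearMap.mul' k I
        (TensorProduct.map (LinearMap.mul' k I) LinearMap.id
          (TensorProduct.map
            (TensorProduct.map (fker p i)
              ((adT k I) ∘ₗ ((TensorProduct.mk k I I).flip y)
                ∘ₗ i.toLinearMap ∘ₗ p.toLinearMap))
            (gker p i)
            (TensorProduct.map (Coalgebra.comul (R := k)) LinearMap.id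
              (Coalgebra.comul (R := k) x))))
      = adT k I (x ⊗ₜ[k] y) := by
  open Coalgebra in
  set T : I →ₗ[k] I := i.toLinearMap ∘ₗ p.toLinearMap with hTdef
  set S : I →ₗ[k] I := HopfAlgebra.antipode (R := k) with hSdef
  set η : k →ₗ[k] I := Algebra.linearMap k I with hηdef
  set ε : I →ₗ[k] k := Coalgebra.counit with hεdef
  have hT := comul_comp_Tm p i
  have hTmul := Tm_mul p i
  -- conv (T ∘ S) T = η ∘ ε
  have hTS : conv (T ∘ₗ S) T = η ∘ₗ ε := by
    have h := conv_postcomp S LinearMap.id T hTmul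
    rw [conv_antipode_left, LinearMap.comp_id] at h
    rw [← h, ← LinearMap.comp_assoc, Tm_comp_linearMap p i]
  -- conv (S ∘ T) T = η ∘ ε
  have hST : conv (S ∘ₗ T) T = η ∘ₗ ε := by
    have h := conv_precomp S LinearMap.id T hT
    rw [conv_antipode_left, LinearMap.id_comp] at h
    rw [← h, LinearMap.comp_assoc, counit_comp_Tm p i]
  have hχ := adT_comp_mkFlip (k := k) (I := I) y
  set M : I →ₗ[k] I := LinearMap.mulLeft k y ∘ₗ S with hMdef
  -- the statement's middle map is (adT ∘ mk.flip y) ∘ T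
  have hψ : ((adT k I) ∘ₗ ((TensorProduct.mk k I I).flip y)
        ∘ₗ i.toLinearMap ∘ₗ p.toLinearMap)
      = conv T (LinearMap.mulLeft k y ∘ₗ (S ∘ₗ T)) := by
    rw [show ((adT k I) ∘ₗ ((TensorProduct.mk k I I).flip y)
        ∘ₗ i.toLinearMap ∘ₗ p.toLinearMap)
      = (adT k I ∘ₗ (TensorProduct.mk k I I).flip y) ∘ₗ T from rfl,
      hχ, conv_precomp _ _ _ hT, LinearMap.id_comp, LinearMap.comp_assoc]
  -- the main convolution computation
  have main : conv (conv (fker p i) (conv T (LinearMap.mulLeft k y ∘ₗ (S ∘ₗ T)))) (gker p i)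
      = conv LinearMap.id M := by
    have hfk : fker p i = conv LinearMap.id (T ∘ₗ S) := rfl
    have hgk : gker p i = conv T S := rfl
    rw [hfk, hgk,
      conv_assoc LinearMap.id (T ∘ₗ S) (conv T (LinearMap.mulLeft k y ∘ₗ (S ∘ₗ T))),
      ← conv_assoc (T ∘ₗ S) T (LinearMap.mulLeft k y ∘ₗ (S ∘ₗ T)), hTS, conv_unit_left,
      conv_assoc, ← conv_assoc (LinearMap.mulLeft k y ∘ₗ (S ∘ₗ T)) T S,
      conv_mulLeft, hST, conv_mulLeft, conv_unit_left]
  -- identify both sides pointwise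
  have rhs : adT k I (x ⊗ₜ[k] y) = conv LinearMap.id M x := by
    rw [← hχ]; rfl
  rw [rhs, ← main, hψ]
  set ψ : I →ₗ[k] I := conv T (LinearMap.mulLeft k y ∘ₗ (S ∘ₗ T)) with hψdef
  rw [conv_repr _ _ (ℛ k x), ← (ℛ k x).eq]
  simp [map_sum, conv]
end
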